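/- Define two sequences by value iteration: p⁰ = 0, p^{k+1} = s + Aᵀp^k + Σᵢ min{rᵢ + Bᵢᵀp^k, 0}·Eᵢ; and q⁰ = 0 ∈ ℝ^{n+m}, q^{k+1} = [A B]ᵀ [I (K^k)ᵀ] q^k + [s; r], where q^k is partitioned as (q^{x,k}, q^{u,k}) ∈ ℝⁿ×ℝ^m and K^k ∈ 𝒦(E) is a greedy gain for q^{u,k}. Then for every k ≥ 0 the vector [I (K^k)ᵀ] q^k equals p^k; i.e., value iteration in the q-parameter is algebraically equivalent to value iteration in the p-parameter. -/
import Mathlib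


open Matrix Finset

/-- `min{v, 0}`: the minimum of 0 and of all entries of the vector `v`. -/
noncomputable def minZero {α : Type*} [Fintype α] (v : α → ℝ) : ℝ :=
  Finset.univ.fold min 0 v

/-- `‖v‖∞` for a vector: the maximum absolute entry. -/
noncomputable def vecSupNorm {α : Type*} [Fintype α] (v : α → ℝ) : ℝ :=
  Finset.univ.fold max 0 (fun a => |v a|)

/-- `‖M‖∞` for a matrix: the maximum absolute row sum. -/
noncomputable def matInfNorm {α β : Type*} [Fintype α] [Fintype β] (M : Matrix α β ℝ) : ℝ :=
  Finset.univ.fold max 0 (fun a => ∑ b, |M a b|)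

/-- `‖M‖₁` for a matrix: the maximum absolute column sum. -/
noncomputable def matOneNorm {α β : Type*} [Fintype α] [Fintype β] (M : Matrix α β ℝ) : ℝ :=
  matInfNorm Mᵀ

/-- The feasible gain set 𝒦(E): K ≥ 0 entrywise and, for each block i,
either 𝟏ᵀKᵢ = Eᵢᵀ or 𝟏ᵀKᵢ = 0. -/
def feasibleGain {n : ℕ} (m : Fin n → ℕ) (E : Matrix (Fin n) (Fin n) ℝ) :
    Set (Matrix ((i : Fin n) × Fin (m i)) (Fin n) ℝ) :=
  {K | (∀ a j, 0 ≤ K a j) ∧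
    ∀ i : Fin n, (∀ j, ∑ k : Fin (m i), K ⟨i, k⟩ j = E i j) ∨ (∀ k j, K ⟨i, k⟩ j = 0)}

/-- The extended constraint matrix Ē: for each i, mᵢ stacked copies of the row Eᵢᵀ. -/
def extE {n : ℕ} (m : Fin n → ℕ) (E : Matrix (Fin n) (Fin n) ℝ) :
    Matrix ((i : Fin n) × Fin (m i)) (Fin n) ℝ :=
  fun a j => E a.1 j

/-- `K` is a greedy gain for `v`: `K ∈ 𝒦(E)` and `Kᵢᵀ vᵢ = min{vᵢ,0}·Eᵢ` for each block i. -/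
def IsGreedy {n : ℕ} (m : Fin n → ℕ) (E : Matrix (Fin n) (Fin n) ℝ)
    (v : ((i : Fin n) × Fin (m i)) → ℝ)
    (K : Matrix ((i : Fin n) × Fin (m i)) (Fin n) ℝ) : Prop :=
  K ∈ feasibleGain m E ∧
    ∀ i j, (∑ k : Fin (m i), K ⟨i, k⟩ j * v ⟨i, k⟩)
      = minZero (fun k : Fin (m i) => v ⟨i, k⟩) * E i j

/-- The Bellman operator `p ↦ s + Aᵀp + Σᵢ min{rᵢ + Bᵢᵀp, 0}·Eᵢ`. -/
noncomputable def bellman {n : ℕ} (m : Fin n → ℕ) (A : Matrix (Fin n) (Fin n) ℝ)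
    (B : Matrix (Fin n) ((i : Fin n) × Fin (m i)) ℝ)
    (s : Fin n → ℝ) (r : ((i : Fin n) × Fin (m i)) → ℝ)
    (E : Matrix (Fin n) (Fin n) ℝ) (p : Fin n → ℝ) : Fin n → ℝ :=
  fun j => s j + Aᵀ.mulVec p j +
    ∑ i : Fin n, minZero (fun k : Fin (m i) => r ⟨i, k⟩ + Bᵀ.mulVec p ⟨i, k⟩) * E i j

/-- value iteration in the q-parameter is algebraically equivalent to
value iteration in the p-parameter: `[I (K^k)ᵀ] q^k = p^k` for every k. -/
theorem stmt_0 {n : ℕ} {m : Fin n → ℕ} (hn : 0 < n) (hm : ∀ i, 0 < m i)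
    (A : Matrix (Fin n) (Fin n) ℝ) (B : Matrix (Fin n) ((i : Fin n) × Fin (m i)) ℝ)
    (s : Fin n → ℝ) (hs : ∀ j, 0 ≤ s j)
    (r : ((i : Fin n) × Fin (m i)) → ℝ) (hr : ∀ a, 0 ≤ r a)
    (E : Matrix (Fin n) (Fin n) ℝ) (hE : ∀ i j, 0 ≤ E i j)
    (p : ℕ → Fin n → ℝ)
    (hp0 : p 0 = 0)
    (hp : ∀ k, p (k + 1) = bellman m A B s r E (p k))
    (qx : ℕ → Fin n → ℝ) (qu : ℕ → ((i : Fin n) × Fin (m i)) → ℝ)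
    (K : ℕ → Matrix ((i : Fin n) × Fin (m i)) (Fin n) ℝ)
    (hqx0 : qx 0 = 0) (hqu0 : qu 0 = 0)
    (hK : ∀ k, IsGreedy m E (qu k) (K k))
    (hqx : ∀ k, qx (k + 1) = fun j => s j + Aᵀ.mulVec (qx k + (K k)ᵀ.mulVec (qu k)) j)
    (hqu : ∀ k, qu (k + 1) = fun a => r a + Bᵀ.mulVec (qx k + (K k)ᵀ.mulVec (qu k)) a) :
    ∀ k, qx k + (K k)ᵀ.mulVec (qu k) = p k := by
  intro k
  induction k with
  | zero =>
    rw [hqx0, hqu0, hp0]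
    ext j
    simp [Matrix.mulVec, dotProduct]
  | succ k ih =>
    ext j
    have hg := (hK (k+1)).2
    have hKj : (K (k+1))ᵀ.mulVec (qu (k+1)) j
        = ∑ i : Fin n, minZero (fun k' : Fin (m i) => qu (k+1) ⟨i, k'⟩) * E i j := by
      rw [Matrix.mulVec]
      rw [show (dotProduct (fun a => (K (k+1))ᵀ j a) (qu (k+1)))
          = ∑ a : (i : Fin n) × Fin (m i), K (k+1) a j * qu (k+1) a from rfl]
      rw [← Finset.univ_sigma_univ, Finset.sum_sigma]
      exact Finset.sum_congr rfl fun i _ => hg i j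
    have hquv : ∀ a, qu (k+1) a = r a + Bᵀ.mulVec (p k) a := by
      intro a; rw [hqu, ← ih]
    simp only [Pi.add_apply, hKj, hqx, hp, bellman, ← ih]
    simp only [hquv]
    rw [ih]
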